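/- Let b divide n with n ≥ 2b. Then any b-burst-deletion-correcting code C ⊆ 𝔽₂ⁿ satisfies |C| ≤ (2^{n−b+1} − 2^b)/(n − 2b + 1). -/

import Mathlib

/-- The `b`-burst-deletion ball of `x`: all vectors obtained from `x` by deleting
`b` consecutive coordinates. -/
def delBall (b : ℕ) {n : ℕ} (x : Fin n → Bool) : Set (Fin (n - b) → Bool) :=
  { y | ∃ i ≤ n - b, ∀ j : Fin (n - b),
      y j = if (j : ℕ) < i
        then x ⟨(j : ℕ), by have := j.isLt; omega⟩
        else x ⟨(j : ℕ) + b, by have := j.isLt; omega⟩ }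

/-- The `b`-burst-insertion ball of `x`: all vectors `v` of length `n + b`
such that `x` is obtained from `v` by deleting `b` consecutive coordinates. -/
def insBall (b : ℕ) {n : ℕ} (x : Fin n → Bool) : Set (Fin (n + b) → Bool) :=
  { v | ∃ i ≤ n, ∀ j : Fin n,
      x j = if (j : ℕ) < i
        then v ⟨(j : ℕ), by have := j.isLt; omega⟩
        else v ⟨(j : ℕ) + b, by have := j.isLt; omega⟩ }

/-- Number of runs (maximal blocks of consecutive equal coordinates) of a binary vector. -/
def numRuns {m : ℕ} (z : Fin m → Bool) : ℕ :=
  (Finset.univ.filter (fun i : Fin m =>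
    (i : ℕ) = 0 ∨ z i ≠ z ⟨(i : ℕ) - 1, by have := i.isLt; omega⟩)).card

/-- Every run of `z` has length at most `f`: every window of `f + 1` consecutive
coordinates contains two different values. -/
def maxRunLe {m : ℕ} (f : ℕ) (z : Fin m → Bool) : Prop :=
  ∀ i : ℕ, ∀ hi : i + f < m, ∃ j : ℕ, ∃ hj : j ≤ f,
    z ⟨i + j, by omega⟩ ≠ z ⟨i, by omega⟩

/-- The Varshamov–Tenengolts code `VT_a(n)`. -/
def VT (n a : ℕ) : Set (Fin n → Bool) :=
  { x | (∑ i : Fin n, ((i : ℕ) + 1) * (x i).toNat) ≡ a [MOD n + 1] }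

/-- The shifted Varshamov–Tenengolts code `SVT_{c,d}(n,P)`. -/
def SVT (n P c d : ℕ) : Set (Fin n → Bool) :=
  { x | (∑ i : Fin n, ((i : ℕ) + 1) * (x i).toNat) ≡ c [MOD P] ∧
        (∑ i : Fin n, (x i).toNat) ≡ d [MOD 2] }

/-- The `(2,1)`-burst-correcting code `C_{2,1}(n,a,c)`. -/
def C21 (n a c : ℕ) : Set (Fin n → Bool) :=
  { x | (∑ i : Fin n, (x i).toNat) ≡ c [MOD 4] ∧
        (∑ i : Fin n, ((i : ℕ) + 1) * (x i).toNat) ≡ a [MOD 2 * n - 1] }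

/-- Row `r` (0-indexed) of the `b × (n / b)` array `A_b(x)`: the entry in
column `j` (0-indexed) is `x (j * b + r)`. -/
def arrRow {n : ℕ} (b : ℕ) (x : Fin n → Bool) (r : Fin b) : Fin (n / b) → Bool :=
  fun j => x ⟨(j : ℕ) * b + (r : ℕ), by
    have hj : (j : ℕ) + 1 ≤ n / b := j.isLt
    have hr := r.isLt
    have h1 : ((j : ℕ) + 1) * b ≤ n / b * b := Nat.mul_le_mul_right b hj
    have h2 : n / b * b ≤ n := Nat.div_mul_le_self n b
    have h3 : ((j : ℕ) + 1) * b = (j : ℕ) * b + b := by ring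
    omega⟩

/-- Non-consecutive burst deletion ball: all vectors obtained from `x` by deleting
`a` coordinates whose positions all lie within a window of `b` consecutive positions. -/
def ncDelBall (a b : ℕ) {n : ℕ} (x : Fin n → Bool) : Set (Fin (n - a) → Bool) :=
  { y | ∃ f : Fin (n - a) → Fin n, StrictMono f ∧ (∀ j, y j = x (f j)) ∧
      ∃ i : ℕ, ∀ p : Fin n, p ∉ Set.range f → i ≤ (p : ℕ) ∧ (p : ℕ) < i + b }

/-- Non-consecutive burst insertion ball: all vectors `v` of length `n + a` from which
`x` is obtained by a non-consecutive deletion burst of `a` deletions within a window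
of `b` consecutive positions. -/
def ncInsBall (a b : ℕ) {n : ℕ} (x : Fin n → Bool) : Set (Fin (n + a) → Bool) :=
  { v | ∃ f : Fin n → Fin (n + a), StrictMono f ∧ (∀ j, x j = v (f j)) ∧
      ∃ i : ℕ, ∀ p : Fin (n + a), p ∉ Set.range f → i ≤ (p : ℕ) ∧ (p : ℕ) < i + b }

/-- The vector obtained from `x` by deleting the coordinate at (0-indexed) position `k`. -/
def delOne {n : ℕ} (x : Fin n → Bool) (k : ℕ) : Fin (n - 1) → Bool :=
  fun j => if (j : ℕ) < k
    then x ⟨(j : ℕ), by have := j.isLt; omega⟩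
    else x ⟨(j : ℕ) + 1, by have := j.isLt; omega⟩

/-- The `(2,1)`-burst ball of `x`: all results of deleting two adjacent coordinates
of `x` and inserting one bit at the same position. -/
def d21Ball {n : ℕ} (x : Fin n → Bool) : Set (Fin (n - 1) → Bool) :=
  { y | ∃ i : ℕ, ∃ hi : i + 1 < n, ∃ a : Bool,
      ∀ j : Fin (n - 1), y j =
        if (j : ℕ) < i then x ⟨(j : ℕ), by have := j.isLt; omega⟩
        else if (j : ℕ) = i then a
        else x ⟨(j : ℕ) + 1, by have := j.isLt; omega⟩ }

namespace BurstAux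

/-- extend a vector by `false`s -/
def ext' {n : ℕ} (x : Fin n → Bool) : ℕ → Bool := fun k => if h : k < n then x ⟨k, h⟩ else false

lemma ext'_lt {n : ℕ} (x : Fin n → Bool) (k : ℕ) (h : k < n) : ext' x k = x ⟨k, h⟩ := dif_pos h

/-- number of positions where `x` differs from its shift by `b` -/
def dc (b : ℕ) {n : ℕ} (x : Fin n → Bool) : ℕ :=
  ((Finset.range (n - b)).filter (fun k => ext' x k ≠ ext' x (k + b))).card

lemma delBall_spec {n b : ℕ} (hbn : b ≤ n) {x : Fin n → Bool} {y : Fin (n - b) → Bool}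
    (hy : y ∈ delBall b x) :
    ∃ i ≤ n - b, ∀ k, k < n - b →
      ext' y k = if k < i then ext' x k else ext' x (k + b) := by
  obtain ⟨i, hi, h⟩ := hy
  refine ⟨i, hi, fun k hk => ?_⟩
  have hk1 : k < n := by omega
  have hk2 : k + b < n := by omega
  rw [ext'_lt y k hk, h ⟨k, hk⟩]
  by_cases hki : k < i
  · rw [if_pos hki, if_pos hki, ext'_lt x k hk1]
  · rw [if_neg hki, if_neg hki, ext'_lt x (k + b) hk2]

lemma win_mem_delBall {n b : ℕ} (hbn : b ≤ n) (x : Fin n → Bool) (i : ℕ) (hi : i ≤ n - b) :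
    (fun j : Fin (n - b) => if (j : ℕ) < i then ext' x j else ext' x ((j : ℕ) + b))
      ∈ delBall b x := by
  refine ⟨i, hi, fun j => ?_⟩
  have h1 : (j : ℕ) < n := by have := j.isLt; omega
  have h2 : (j : ℕ) + b < n := by have := j.isLt; omega
  by_cases hj : (j : ℕ) < i
  · simp only [if_pos hj, ext'_lt x _ h1]
  · simp only [if_neg hj, ext'_lt x _ h2]

lemma dc_mono {n b : ℕ} (hb : 0 < b) (hn : 2 * b ≤ n) (x : Fin n → Bool)
    {y : Fin (n - b) → Bool} (hy : y ∈ delBall b x) : dc b y ≤ dc b x := by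
  classical
  obtain ⟨i, hi, h⟩ := delBall_spec (by omega) hy
  set g : ℕ → ℕ := fun k => if k + b < i then k else if i ≤ k then k + b
      else if ext' x k ≠ ext' x (k + b) then k else k + b with hg
  apply Finset.card_le_card_of_injOn g
  · intro k hk
    simp only [Finset.mem_coe, Finset.mem_filter, Finset.mem_range] at hk ⊢
    obtain ⟨hk1, hk2⟩ := hk
    -- hk1 : k < n - b - b
    have hyk := h k (by omega)
    have hykb := h (k + b) (by omega)
    by_cases c1 : k + b < i
    · have c1' : k < i := by omega
      rw [if_pos c1'] at hyk
      rw [if_pos c1] at hykb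
      rw [hyk, hykb] at hk2
      have hgk : g k = k := by simp only [hg, if_pos c1]
      rw [hgk]
      exact ⟨by omega, hk2⟩
    · by_cases c2 : i ≤ k
      · rw [if_neg (by omega)] at hyk
        rw [if_neg (by omega)] at hykb
        rw [hyk, hykb] at hk2
        have hgk : g k = k + b := by simp only [hg, if_neg c1, if_pos c2]
        rw [hgk]
        exact ⟨by omega, hk2⟩
      · rw [if_pos (by omega)] at hyk
        rw [if_neg (by omega)] at hykb
        rw [hyk, hykb] at hk2
        by_cases c3 : ext' x k ≠ ext' x (k + b)
        · have hgk : g k = k := by simp only [hg, if_neg c1, if_neg c2, if_pos c3]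
          rw [hgk]
          exact ⟨by omega, c3⟩
        · have hgk : g k = k + b := by simp only [hg, if_neg c1, if_neg c2, if_neg c3]
          rw [hgk]
          push_neg at c3
          refine ⟨by omega, ?_⟩
          rw [← c3]
          exact hk2
  · have key : ∀ k, (g k = k ∧ k < i) ∨ (g k = k + b ∧ i ≤ k + b) := by
      intro k
      simp only [hg]
      split_ifs <;> omega
    intro k1 _ k2 _ heq
    rcases key k1 with ⟨e1, f1⟩ | ⟨e1, f1⟩ <;> rcases key k2 with ⟨e2, f2⟩ | ⟨e2, f2⟩ <;>
      rw [e1, e2] at heq <;> omega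

lemma exists_rep_finset {n b : ℕ} (hb : 0 < b) (hn : 2 * b ≤ n) (x : Fin n → Bool) :
    ∃ F : Finset (Fin (n - b) → Bool), F.card = dc b x + 1 ∧ ∀ y ∈ F, y ∈ delBall b x := by
  classical
  set w : ℕ → (Fin (n - b) → Bool) :=
    fun i => fun j : Fin (n - b) => if (j : ℕ) < i then ext' x j else ext' x ((j : ℕ) + b)
    with hw
  set S := (Finset.range (n - b)).filter (fun k => ext' x k ≠ ext' x (k + b)) with hS
  set R : Finset ℕ := insert 0 (S.image (· + 1)) with hR
  have hRle : ∀ i ∈ R, i ≤ n - b := by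
    intro i hiR
    simp only [hR, Finset.mem_insert, Finset.mem_image, Finset.mem_filter,
      Finset.mem_range, hS] at hiR
    rcases hiR with rfl | ⟨k, ⟨hk, _⟩, rfl⟩ <;> omega
  have hwlt : ∀ i j, i ∈ R → j ∈ R → i < j → w i ≠ w j := by
    intro i j hiR hjR hij
    have hj0 : j ≠ 0 := by omega
    simp only [hR, Finset.mem_insert, Finset.mem_image, hS, Finset.mem_filter,
      Finset.mem_range] at hjR
    rcases hjR with rfl | ⟨k, ⟨hk, hdk⟩, rfl⟩
    · omega
    · intro hcon
      have := congrFun hcon ⟨k, hk⟩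
      simp only [hw] at this
      rw [if_neg (by omega), if_pos (by omega)] at this
      exact hdk this.symm
  have hinj : Set.InjOn w ↑R := by
    intro i hi j hj hij
    rcases lt_trichotomy i j with hlt | heq | hgt
    · exact absurd hij (hwlt i j hi hj hlt)
    · exact heq
    · exact absurd hij.symm (hwlt j i hj hi hgt)
  refine ⟨R.image w, ?_, ?_⟩
  · rw [Finset.card_image_of_injOn hinj, hR,
      Finset.card_insert_of_notMem (by simp), Finset.card_image_of_injective _
        (fun a b hab => by omega)]
    rfl
  · intro y hy
    simp only [Finset.mem_image] at hy
    obtain ⟨i, hiR, rfl⟩ := hy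
    exact win_mem_delBall (by omega) x i (hRle i hiR)

lemma card_filter_univ_fin {M : ℕ} (p : ℕ → Prop) [DecidablePred p] :
    (Finset.univ.filter (fun k : Fin M => p (k : ℕ))).card
      = ((Finset.range M).filter p).card := by
  rw [Finset.card_filter, Finset.card_filter]
  exact Fin.sum_univ_eq_sum_range (fun k => if p k then 1 else 0) M

lemma choose_sum_identity (M : ℕ) :
    ∑ j ∈ Finset.range (M + 1), ((M.choose j : ℝ)) * (1 / ((j : ℝ) + 1))
      = ((2 : ℝ) ^ (M + 1) - 1) / ((M : ℝ) + 1) := by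
  have hterm : ∀ j ∈ Finset.range (M + 1),
      ((M.choose j : ℝ)) * (1 / ((j : ℝ) + 1))
        = ((M + 1).choose (j + 1) : ℝ) * (1 / ((M : ℝ) + 1)) := by
    intro j _
    have h := Nat.add_one_mul_choose_eq M j
    have h' : ((M : ℝ) + 1) * (M.choose j : ℝ) = ((M + 1).choose (j + 1) : ℝ) * ((j : ℝ) + 1) := by
      exact_mod_cast congrArg (Nat.cast : ℕ → ℝ) h
    have hj1 : ((j : ℝ) + 1) ≠ 0 := by positivity
    have hM1 : ((M : ℝ) + 1) ≠ 0 := by positivity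
    field_simp
    linarith [h']
  rw [Finset.sum_congr rfl hterm, ← Finset.sum_mul]
  have hnat : ∑ j ∈ Finset.range (M + 1), (M + 1).choose (j + 1) = 2 ^ (M + 1) - 1 := by
    have h1 := Nat.sum_range_choose (M + 1)
    have h2 := Finset.sum_range_succ' (fun i => (M + 1).choose i) (M + 1)
    simp only [Nat.choose_zero_right] at h2
    omega
  have hcast : (∑ j ∈ Finset.range (M + 1), ((M + 1).choose (j + 1) : ℝ))
      = (2 : ℝ) ^ (M + 1) - 1 := by
    rw [← Nat.cast_sum]
    rw [hnat]
    have : (1 : ℕ) ≤ 2 ^ (M + 1) := Nat.one_le_two_pow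
    push_cast [this]
    ring
  rw [hcast]
  ring

lemma sum_inv_dc (b m : ℕ) (hb : 0 < b) (hbm : b ≤ m) :
    ∑ y : Fin m → Bool, (1 : ℝ) / ((dc b y : ℝ) + 1)
      = (2 : ℝ) ^ b * (((2 : ℝ) ^ (m - b + 1) - 1) / (((m - b : ℕ) : ℝ) + 1)) := by
  classical
  set M := m - b with hM
  set Φ : (Fin m → Bool) → (Fin b → Bool) × (Fin M → Bool) :=
    fun y => (fun r => y ⟨(r : ℕ), by omega⟩,
      fun k => ext' y (k : ℕ) != ext' y ((k : ℕ) + b)) with hΦ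
  have hΦinj : Function.Injective Φ := by
    intro y z hyz
    have h1 := congrFun (congrArg Prod.fst hyz)
    have h2 := congrFun (congrArg Prod.snd hyz)
    simp only [hΦ] at h1 h2
    have key : ∀ k, ext' y k = ext' z k := by
      intro k
      induction k using Nat.strong_induction_on with
      | _ k ih =>
        by_cases hk : k < m
        · by_cases hkb : k < b
          · rw [ext'_lt y k hk, ext'_lt z k hk]
            exact h1 ⟨k, hkb⟩
          · have hk' : k - b < M := by omega
            have hd := h2 ⟨k - b, hk'⟩
            have hkk : (k - b) + b = k := by omega
            simp only [hkk] at hd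
            have ihkb := ih (k - b) (by omega)
            rw [ihkb] at hd
            rcases Bool.dichotomy (ext' z (k - b)) with ha | ha <;>
              rcases Bool.dichotomy (ext' y k) with hb' | hb' <;>
              rcases Bool.dichotomy (ext' z k) with hc | hc <;>
              simp [ha, hb', hc] at hd ⊢
        · unfold ext'
          rw [dif_neg hk, dif_neg hk]
    funext j
    have := key (j : ℕ)
    rwa [ext'_lt y _ j.isLt, ext'_lt z _ j.isLt] at this
  have hcard : Fintype.card (Fin m → Bool)
      = Fintype.card ((Fin b → Bool) × (Fin M → Bool)) := by
    simp only [Fintype.card_fun, Fintype.card_prod, Fintype.card_bool, Fintype.card_fin]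
    rw [← pow_add]
    congr 1
    omega
  have hΦbij : Function.Bijective Φ :=
    (Fintype.bijective_iff_injective_and_card Φ).2 ⟨hΦinj, hcard⟩
  -- weight of second component
  set wt : (Fin M → Bool) → ℕ := fun d => (Finset.univ.filter (fun k => d k = true)).card
    with hwt
  have hdc : ∀ y : Fin m → Bool, dc b y = wt (Φ y).2 := by
    intro y
    simp only [hΦ, hwt, dc]
    rw [card_filter_univ_fin (M := M) (p := fun k => (ext' y k != ext' y (k + b)) = true), hM]
    congr 1
    apply Finset.filter_congr
    intro k _
    simp [bne_iff_ne]
  have step1 : ∑ y : Fin m → Bool, (1 : ℝ) / ((dc b y : ℝ) + 1)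
      = ∑ p : (Fin b → Bool) × (Fin M → Bool), (1 : ℝ) / ((wt p.2 : ℝ) + 1) := by
    apply Fintype.sum_bijective Φ hΦbij
    intro y
    rw [hdc y]
  rw [step1, Fintype.sum_prod_type]
  have step2 : ∀ p : Fin b → Bool,
      (∑ d : Fin M → Bool, (1 : ℝ) / ((wt d : ℝ) + 1))
        = ((2 : ℝ) ^ (M + 1) - 1) / ((M : ℝ) + 1) := by
    intro p
    set ψ : (Fin M → Bool) → Finset (Fin M) := fun d => Finset.univ.filter (fun k => d k = true)
      with hψ
    have hψinj : Function.Injective ψ := by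
      intro d d' hdd
      funext k
      have : k ∈ ψ d ↔ k ∈ ψ d' := by rw [hdd]
      simp only [hψ, Finset.mem_filter, Finset.mem_univ, true_and] at this
      rcases Bool.dichotomy (d k) with h | h <;> rcases Bool.dichotomy (d' k) with h' | h' <;>
        simp [h, h'] at this ⊢
    have hψbij : Function.Bijective ψ :=
      (Fintype.bijective_iff_injective_and_card ψ).2
        ⟨hψinj, by simp [Fintype.card_fun, Fintype.card_finset]⟩
    have e1 : ∑ d : Fin M → Bool, (1 : ℝ) / ((wt d : ℝ) + 1)
        = ∑ s : Finset (Fin M), (1 : ℝ) / ((s.card : ℝ) + 1) :=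
      Fintype.sum_bijective ψ hψbij _ _ (fun d => rfl)
    rw [e1]
    have e2 : ∑ s : Finset (Fin M), (1 : ℝ) / ((s.card : ℝ) + 1)
        = ∑ j ∈ Finset.range (M + 1), ((M.choose j : ℝ)) * (1 / ((j : ℝ) + 1)) := by
      rw [← Finset.powerset_univ, Finset.sum_powerset]
      simp only [Finset.card_univ, Fintype.card_fin]
      apply Finset.sum_congr rfl
      intro j hj
      rw [Finset.sum_congr rfl (fun s hs => by
        rw [(Finset.mem_powersetCard.1 hs).2]), Finset.sum_const,
        Finset.card_powersetCard, Finset.card_univ, Fintype.card_fin]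
      simp [mul_comm]
    rw [e2, choose_sum_identity]
  rw [Finset.sum_congr rfl (fun p _ => step2 p), Finset.sum_const]
  simp only [Finset.card_univ, Fintype.card_fun, Fintype.card_bool, Fintype.card_fin,
    nsmul_eq_mul]
  push_cast
  ring

end BurstAux

/-- any `b`-burst-deletion-correcting code `C ⊆ 𝔽₂ⁿ` (with `b ∣ n`, `n ≥ 2b`)
satisfies `|C| ≤ (2^{n−b+1} − 2^b)/(n − 2b + 1)`. -/
theorem burst_deletion_code_card_upper_bound (n b : ℕ) (hb : 0 < b) (hdvd : b ∣ n)
    (hn : 2 * b ≤ n) (C : Set (Fin n → Bool))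
    (hC : ∀ x ∈ C, ∀ y ∈ C, x ≠ y → delBall b x ∩ delBall b y = ∅) :
    (C.ncard : ℝ) ≤ ((2 : ℝ) ^ (n - b + 1) - 2 ^ b) / ((n : ℝ) - 2 * b + 1) := by
  classical
  have hF := fun x : Fin n → Bool => BurstAux.exists_rep_finset hb hn x
  choose F hFcard hFmem using hF
  set f : (Fin (n - b) → Bool) → ℝ := fun y => 1 / ((BurstAux.dc b y : ℝ) + 1) with hf
  set Cf := (Set.toFinite C).toFinset with hCf
  have hmem : ∀ x, x ∈ Cf ↔ x ∈ C := fun x => Set.Finite.mem_toFinset _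
  have hdisj : (↑Cf : Set (Fin n → Bool)).PairwiseDisjoint F := by
    intro x hx y hy hxy
    simp only [Finset.mem_coe, hmem] at hx hy
    refine Finset.disjoint_left.2 fun z hzx hzy => ?_
    have hball := hC x hx y hy hxy
    have hz : z ∈ delBall b x ∩ delBall b y := ⟨hFmem x z hzx, hFmem y z hzy⟩
    rw [hball] at hz
    exact hz
  have h1 : ∀ x ∈ Cf, (1 : ℝ) ≤ ∑ y ∈ F x, f y := by
    intro x hx
    have hle : ∀ y ∈ F x, (1 : ℝ) / ((BurstAux.dc b x : ℝ) + 1) ≤ f y := by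
      intro y hy
      have hmono := BurstAux.dc_mono hb hn x (hFmem x y hy)
      have hcast : ((BurstAux.dc b y : ℝ)) ≤ ((BurstAux.dc b x : ℝ)) := Nat.cast_le.2 hmono
      simp only [hf]
      apply one_div_le_one_div_of_le (by positivity)
      linarith
    have hsum := Finset.card_nsmul_le_sum (F x) f _ hle
    rw [hFcard x] at hsum
    have hne : ((BurstAux.dc b x : ℝ) + 1) ≠ 0 := by positivity
    calc (1 : ℝ) = ((BurstAux.dc b x : ℝ) + 1) * (1 / ((BurstAux.dc b x : ℝ) + 1)) := by
          field_simp
      _ = (BurstAux.dc b x + 1 : ℕ) • (1 / ((BurstAux.dc b x : ℝ) + 1)) := by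
          rw [nsmul_eq_mul]; push_cast; ring
      _ ≤ ∑ y ∈ F x, f y := hsum
  have hchain : (Cf.card : ℝ) ≤ ∑ y : Fin (n - b) → Bool, f y := by
    calc (Cf.card : ℝ) = ∑ _x ∈ Cf, (1 : ℝ) := by simp
      _ ≤ ∑ x ∈ Cf, ∑ y ∈ F x, f y := Finset.sum_le_sum h1
      _ = ∑ y ∈ Cf.biUnion F, f y := (Finset.sum_biUnion hdisj).symm
      _ ≤ ∑ y : Fin (n - b) → Bool, f y := by
          apply Finset.sum_le_sum_of_subset_of_nonneg (Finset.subset_univ _)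
          intro y _ _
          simp only [hf]
          positivity
  have hsumval := BurstAux.sum_inv_dc b (n - b) hb (by omega)
  rw [hsumval] at hchain
  have hNcard : (C.ncard : ℝ) = (Cf.card : ℝ) := by
    rw [Set.ncard_eq_toFinset_card C (Set.toFinite C)]
  rw [hNcard]
  have hM : n - b - b = n - 2 * b := by omega
  rw [hM] at hchain
  have h2 : (n : ℝ) - 2 * b + 1 = ((n - 2 * b : ℕ) : ℝ) + 1 := by
    rw [Nat.cast_sub hn]
    push_cast
    ring
  have h3 : (2 : ℝ) ^ (n - b + 1) = 2 ^ b * 2 ^ ((n - 2 * b) + 1) := by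
    rw [← pow_add]
    congr 1
    omega
  have hD : ((n - 2 * b : ℕ) : ℝ) + 1 ≠ 0 := by positivity
  rw [h2, h3]
  calc (Cf.card : ℝ) ≤ (2 : ℝ) ^ b * (((2 : ℝ) ^ (n - 2 * b + 1) - 1) / (((n - 2 * b : ℕ) : ℝ) + 1)) :=
        hchain
    _ = ((2 : ℝ) ^ b * (2 : ℝ) ^ (n - 2 * b + 1) - 2 ^ b) / (((n - 2 * b : ℕ) : ℝ) + 1) := by
        field_simp
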